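/- For the stepsizes {α_k} generated by the general AdaBB iteration: (i) if α_j ≥ 1/(√2·L) for some j ≥ 0, then α_k ≥ 1/(√2·L) for every k ≥ j; (ii) α_k ≥ c := min{α_0, 1/(√2·L)} > 0 for all k ≥ 0; (iii) consequently Σ_{i=1}^k α_i ≥ c·k for all k ≥ 1. -/

import Mathlib

open scoped RealInnerProductSpace
open Finset Filter

noncomputable section

/-- The general AdaBB iteration (Algorithm 2 of the paper) for a convex differentiable
function `f : ℝⁿ → ℝ` that attains its minimum.  `f'` is the gradient of `f`,
`x` the iterates, `α` the stepsizes, `θ` the stepsize ratios and `lam` the short BB stepsizes. -/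
structure AdaBB (n : ℕ) where
  f : EuclideanSpace ℝ (Fin n) → ℝ
  f' : EuclideanSpace ℝ (Fin n) → EuclideanSpace ℝ (Fin n)
  x : ℕ → EuclideanSpace ℝ (Fin n)
  α : ℕ → ℝ
  θ : ℕ → ℝ
  lam : ℕ → ℝ
  hconv : ConvexOn ℝ Set.univ f
  hgrad : ∀ y, HasGradientAt f (f' y) y
  hmin : ∃ z, ∀ y, f z ≤ f y
  hα0 : 0 < α 0
  hθ0 : 0 ≤ θ 0
  hx1 : x 1 = x 0 - α 0 • f' (x 0)
  hne : ∀ k, f' (x (k + 1)) ≠ f' (x k)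
  hlam : ∀ k, lam (k + 1) =
    ⟪f' (x (k + 1)) - f' (x k), x (k + 1) - x k⟫ / ‖f' (x (k + 1)) - f' (x k)‖ ^ 2
  hlampos : ∀ k, 0 < lam (k + 1)
  hcase1 : ∀ k, α k ≤ lam (k + 1) →
    α (k + 1) = Real.sqrt (1 + θ k) * α k ∧ θ (k + 1) = α (k + 1) / α k
  hcase2 : ∀ k, α k / 2 < lam (k + 1) → lam (k + 1) < α k →
    (α (k + 1) = min (Real.sqrt (lam (k + 1) / (2 * (α k - lam (k + 1)))))
        (Real.sqrt ((1 + θ k) * lam (k + 1) / (2 * lam (k + 1) - α k))) * α k ∨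
      α (k + 1) = lam (k + 1)) ∧
    θ (k + 1) = 2 * α (k + 1) / α k - α (k + 1) / lam (k + 1)
  hcase3 : ∀ k, lam (k + 1) ≤ α k / 2 →
    (α (k + 1) = Real.sqrt (α k / (2 * (α k - lam (k + 1)))) * lam (k + 1) ∨
      α (k + 1) = lam (k + 1) / Real.sqrt 2) ∧
    θ (k + 1) = α (k + 1) / α k
  hstep : ∀ k, x (k + 2) = x (k + 1) - α (k + 1) • f' (x (k + 1))

namespace AdaBB

variable {n : ℕ}

/-- `M_k` (for `k ≥ 1`). -/
def M (S : AdaBB n) (k : ℕ) : ℝ :=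
  if S.α (k - 1) ≤ S.lam k then 0
  else if S.α (k - 1) / 2 < S.lam k then
    S.α k ^ 2 / (S.lam k * S.α (k - 1)) - S.α k ^ 2 / S.α (k - 1) ^ 2
  else S.α k ^ 2 / S.lam k ^ 2 - S.α k ^ 2 / (S.α (k - 1) * S.lam k)

/-- `P_k` for `k ≥ 1`. -/
def Paux (S : AdaBB n) (k : ℕ) : ℝ :=
  if S.α (k - 1) ≤ S.lam k then S.α k ^ 2 / S.α (k - 1)
  else if S.α (k - 1) / 2 < S.lam k then
    2 * S.α k ^ 2 / S.α (k - 1) - S.α k ^ 2 / S.lam k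
  else S.α k ^ 2 / S.α (k - 1)

/-- `P_k`, with the convention `P_0 = P_1 - α_0`. -/
def P (S : AdaBB n) (k : ℕ) : ℝ :=
  if k = 0 then S.Paux 1 - S.α 0 else S.Paux k

/-- `w_k = α_k + P_k - P_{k+1}`. -/
def w (S : AdaBB n) (k : ℕ) : ℝ := S.α k + S.P k - S.P (k + 1)

/-- The Lyapunov function `Υ_k` (for `k ≥ 1`), relative to a minimizer `xs` of `f`. -/
def Upsilon (S : AdaBB n) (xs : EuclideanSpace ℝ (Fin n)) (k : ℕ) : ℝ :=
  ‖S.x k - xs‖ ^ 2 + 2 * S.M k * ‖S.x k - S.x (k - 1)‖ ^ 2 +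
    (2 * S.α (k - 1) + 2 * S.P (k - 1)) * (S.f (S.x (k - 1)) - S.f xs)

end AdaBB

end

noncomputable section AuxAdaBB
open scoped RealInnerProductSpace
open Filter Topology

namespace AdaBB
variable {n : ℕ} (S : AdaBB n)

lemma xstep : ∀ k, S.x (k + 1) = S.x k - S.α k • S.f' (S.x k) := by
  intro k
  cases k with
  | zero => exact S.hx1
  | succ m => exact S.hstep m

lemma xdiff (k : ℕ) : S.x (k + 1) - S.x k = -(S.α k • S.f' (S.x k)) := by
  rw [S.xstep k]; abel

lemma pos : ∀ k, 0 < S.α k ∧ 0 ≤ S.θ k := by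
  intro k
  induction k with
  | zero => exact ⟨S.hα0, S.hθ0⟩
  | succ k ih =>
    rcases le_or_gt (S.α k) (S.lam (k+1)) with h1 | h1
    · obtain ⟨ha, hθ⟩ := S.hcase1 k h1
      have hs : 0 < Real.sqrt (1 + S.θ k) := Real.sqrt_pos.mpr (by linarith [ih.2])
      have hA : 0 < S.α (k+1) := by rw [ha]; exact mul_pos hs ih.1
      exact ⟨hA, by rw [hθ]; exact div_nonneg hA.le ih.1.le⟩
    · have hlp := S.hlampos k
      rcases lt_or_ge (S.α k / 2) (S.lam (k+1)) with h2 | h2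
      · obtain ⟨ha, hθ⟩ := S.hcase2 k h2 h1
        have hA : 0 < S.α (k+1) := by
          rcases ha with h | h
          · rw [h]
            refine mul_pos (lt_min ?_ ?_) ih.1
            · exact Real.sqrt_pos.mpr (div_pos hlp (by linarith))
            · exact Real.sqrt_pos.mpr (div_pos (mul_pos (by linarith [ih.2]) hlp) (by linarith))
          · rw [h]; exact hlp
        refine ⟨hA, ?_⟩
        rw [hθ, sub_nonneg, div_le_div_iff₀ hlp ih.1]
        nlinarith
      · obtain ⟨ha, hθ⟩ := S.hcase3 k h2
        have hA : 0 < S.α (k+1) := by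
          rcases ha with h | h
          · rw [h]
            exact mul_pos (Real.sqrt_pos.mpr (div_pos ih.1 (by linarith))) hlp
          · rw [h]; exact div_pos hlp (Real.sqrt_pos.mpr (by norm_num))
        exact ⟨hA, by rw [hθ]; exact div_nonneg hA.le ih.1.le⟩

lemma Dpos (k : ℕ) : 0 < ‖S.f' (S.x (k+1)) - S.f' (S.x k)‖ ^ 2 :=
  pow_pos (norm_pos_iff.mpr (sub_ne_zero.mpr (S.hne k))) 2

lemma lam_mul (k : ℕ) :
    S.lam (k+1) * ‖S.f' (S.x (k+1)) - S.f' (S.x k)‖ ^ 2 =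
      ⟪S.f' (S.x (k+1)) - S.f' (S.x k), S.x (k+1) - S.x k⟫ := by
  rw [S.hlam k, div_mul_cancel₀]
  exact ne_of_gt (S.Dpos k)

lemma lam_inner (k : ℕ) :
    S.lam (k+1) * ‖S.f' (S.x (k+1)) - S.f' (S.x k)‖ ^ 2 =
      S.α k * ‖S.f' (S.x k)‖ ^ 2 - S.α k * ⟪S.f' (S.x (k+1)), S.f' (S.x k)⟫ := by
  rw [S.lam_mul k, S.xdiff k, inner_neg_right, real_inner_smul_right, inner_sub_left,
    real_inner_self_eq_norm_sq]
  ring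

/-- `a‖v‖² = a‖u‖² + (a-2λ)‖v-u‖²`. -/
lemma E3 (k : ℕ) :
    S.α k * ‖S.f' (S.x (k+1))‖ ^ 2 =
      S.α k * ‖S.f' (S.x k)‖ ^ 2 +
        (S.α k - 2 * S.lam (k+1)) * ‖S.f' (S.x (k+1)) - S.f' (S.x k)‖ ^ 2 := by
  have hns : ‖S.f' (S.x (k+1)) - S.f' (S.x k)‖ ^ 2 =
      ‖S.f' (S.x (k+1))‖ ^ 2 - 2 * ⟪S.f' (S.x (k+1)), S.f' (S.x k)⟫ + ‖S.f' (S.x k)‖ ^ 2 :=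
    norm_sub_sq_real _ _
  have h4 := S.lam_inner k
  linear_combination (-(S.α k)) * hns + 2 * h4

/-- `λ²‖v-u‖² ≤ a²‖u‖²`. -/
lemma E5 (k : ℕ) :
    S.lam (k+1) ^ 2 * ‖S.f' (S.x (k+1)) - S.f' (S.x k)‖ ^ 2 ≤
      S.α k ^ 2 * ‖S.f' (S.x k)‖ ^ 2 := by
  set s := ‖S.f' (S.x (k+1)) - S.f' (S.x k)‖ with hs
  have hspos : 0 < s := norm_pos_iff.mpr (sub_ne_zero.mpr (S.hne k))
  have ha := (S.pos k).1
  have hl := S.hlampos k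
  have h1 : S.lam (k+1) * s ^ 2 ≤ s * (S.α k * ‖S.f' (S.x k)‖) := by
    rw [S.lam_mul k, S.xdiff k]
    calc ⟪S.f' (S.x (k+1)) - S.f' (S.x k), -(S.α k • S.f' (S.x k))⟫
        ≤ ‖S.f' (S.x (k+1)) - S.f' (S.x k)‖ * ‖-(S.α k • S.f' (S.x k))‖ :=
          real_inner_le_norm _ _
      _ = s * (S.α k * ‖S.f' (S.x k)‖) := by
          rw [norm_neg, norm_smul, Real.norm_eq_abs, abs_of_pos ha]
  have h2 : S.lam (k+1) * s ≤ S.α k * ‖S.f' (S.x k)‖ := by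
    have := h1
    rw [pow_two] at this
    have h3 : S.lam (k+1) * s * s ≤ S.α k * ‖S.f' (S.x k)‖ * s := by nlinarith
    exact le_of_mul_le_mul_right h3 hspos
  nlinarith [mul_nonneg hl.le hspos.le, norm_nonneg (S.f' (S.x k))]

end AdaBB

theorem my_grad_ineq {E : Type*} [NormedAddCommGroup E] [InnerProductSpace ℝ E] [CompleteSpace E]
    {f : E → ℝ} {g : E → E} (hconv : ConvexOn ℝ Set.univ f)
    (hg : ∀ y, HasGradientAt f (g y) y) (x y : E) :
    f x + ⟪g x, y - x⟫ ≤ f y := by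
  set φ : ℝ → ℝ := fun t => f (AffineMap.lineMap x y t) with hφ
  have hφconv : ConvexOn ℝ Set.univ φ := by
    have h := hconv.comp_affineMap (AffineMap.lineMap x y : ℝ →ᵃ[ℝ] E)
    rw [Set.preimage_univ] at h; exact h
  have h0 : AffineMap.lineMap x y (0:ℝ) = x := AffineMap.lineMap_apply_zero x y
  have h1 : AffineMap.lineMap x y (1:ℝ) = y := AffineMap.lineMap_apply_one x y
  have hd : HasDerivAt φ ⟪g x, y - x⟫ 0 := by
    have hl : HasDerivAt (fun t : ℝ => AffineMap.lineMap x y t) (y - x) 0 := by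
      simp only [AffineMap.lineMap_apply_module']
      simpa using ((hasDerivAt_id (0:ℝ)).smul_const (y - x)).add_const x
    have h2 : HasFDerivAt f (InnerProductSpace.toDual ℝ E (g x)) x := (hg x).hasFDerivAt
    rw [← h0] at h2
    have h3 := h2.comp_hasDerivAt (0:ℝ) hl
    simp only [InnerProductSpace.toDual_apply_apply] at h3; rw [h0] at h3; exact h3
  have htend : Tendsto (slope φ 0) (𝓝[>] (0:ℝ)) (𝓝 ⟪g x, y - x⟫) :=
    (hasDerivAt_iff_tendsto_slope.mp hd).mono_left
      (nhdsWithin_mono 0 fun t ht => Set.mem_compl_singleton_iff.mpr (ne_of_gt ht))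
  have hle : ⟪g x, y - x⟫ ≤ slope φ 0 1 := by
    refine le_of_tendsto htend ?_
    filter_upwards [Ioo_mem_nhdsGT_of_mem (Set.left_mem_Ico.mpr one_pos)] with t ht
    have := hφconv.secant_mono (a := 0) (x := t) (y := 1) trivial trivial trivial
      (ne_of_gt ht.1) one_ne_zero ht.2.le
    simpa [slope_def_field] using this
  have hs : slope φ 0 1 = f y - f x := by
    simp [slope_def_field, hφ, h0, h1]
  rw [hs] at hle; linarith

namespace AdaBB
variable {n : ℕ} (S : AdaBB n)

/-- `a‖u‖² ≤ f(xₖ) - f(xₖ₊₁) + λ‖v-u‖²`. -/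
lemma E4 (k : ℕ) :
    S.α k * ‖S.f' (S.x k)‖ ^ 2 ≤
      S.f (S.x k) - S.f (S.x (k+1)) + S.lam (k+1) * ‖S.f' (S.x (k+1)) - S.f' (S.x k)‖ ^ 2 := by
  have hg := my_grad_ineq S.hconv S.hgrad (S.x (k+1)) (S.x k)
  have hx : S.x k - S.x (k+1) = S.α k • S.f' (S.x k) := by
    rw [S.xstep k]; abel
  rw [hx, real_inner_smul_right] at hg
  have h4 := S.lam_inner k
  linarith [h4, hg]

lemma M_succ_eq (k : ℕ) : S.M (k+1) =
    if S.α k ≤ S.lam (k+1) then 0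
    else if S.α k / 2 < S.lam (k+1) then
      S.α (k+1) ^ 2 / (S.lam (k+1) * S.α k) - S.α (k+1) ^ 2 / S.α k ^ 2
    else S.α (k+1) ^ 2 / S.lam (k+1) ^ 2 - S.α (k+1) ^ 2 / (S.α k * S.lam (k+1)) := by
  simp only [AdaBB.M, Nat.add_sub_cancel]

lemma Paux_succ_eq (k : ℕ) : S.Paux (k+1) =
    if S.α k ≤ S.lam (k+1) then S.α (k+1) ^ 2 / S.α k
    else if S.α k / 2 < S.lam (k+1) then
      2 * S.α (k+1) ^ 2 / S.α k - S.α (k+1) ^ 2 / S.lam (k+1)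
    else S.α (k+1) ^ 2 / S.α k := by
  simp only [AdaBB.Paux, Nat.add_sub_cancel]

lemma M_bounds (k : ℕ) : 0 ≤ S.M (k+1) ∧ S.M (k+1) ≤ 1/2 := by
  have ha := (S.pos k).1
  have hb := (S.pos (k+1)).1
  have hl := S.hlampos k
  have hθ := (S.pos k).2
  rw [S.M_succ_eq k]
  rcases le_or_gt (S.α k) (S.lam (k+1)) with h1 | h1
  · rw [if_pos h1]; norm_num
  · rw [if_neg (not_le.mpr h1)]
    rcases lt_or_ge (S.α k / 2) (S.lam (k+1)) with h2 | h2
    · rw [if_pos h2]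
      obtain ⟨hab, -⟩ := S.hcase2 k h2 h1
      have hid : S.α (k+1) ^ 2 / (S.lam (k+1) * S.α k) - S.α (k+1) ^ 2 / S.α k ^ 2 =
          S.α (k+1) ^ 2 * (S.α k - S.lam (k+1)) / (S.lam (k+1) * S.α k ^ 2) := by
        field_simp
      rw [hid]
      constructor
      · apply div_nonneg _ (by positivity)
        have : 0 ≤ S.α k - S.lam (k+1) := by linarith
        positivity
      · rw [div_le_iff₀ (by positivity)]
        rcases hab with h | h
        · have hble : S.α (k+1) ≤ Real.sqrt (S.lam (k+1) / (2 * (S.α k - S.lam (k+1)))) * S.α k := by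
            rw [h]
            exact mul_le_mul_of_nonneg_right (min_le_left _ _) ha.le
          have hb2 : S.α (k+1) ^ 2 ≤ S.lam (k+1) / (2 * (S.α k - S.lam (k+1))) * S.α k ^ 2 := by
            have hnn : (0:ℝ) ≤ S.lam (k+1) / (2 * (S.α k - S.lam (k+1))) :=
              div_nonneg hl.le (by linarith)
            calc S.α (k+1) ^ 2 ≤ (Real.sqrt (S.lam (k+1) / (2 * (S.α k - S.lam (k+1)))) * S.α k) ^ 2 := by
                  nlinarith [hb.le]
              _ = S.lam (k+1) / (2 * (S.α k - S.lam (k+1))) * S.α k ^ 2 := by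
                  rw [mul_pow, Real.sq_sqrt hnn]
          have hkey : S.lam (k+1) / (2 * (S.α k - S.lam (k+1))) * S.α k ^ 2 * (S.α k - S.lam (k+1)) =
              S.lam (k+1) * S.α k ^ 2 / 2 := by
            have : S.α k - S.lam (k+1) ≠ 0 := by linarith
            field_simp
          nlinarith [hb2, hkey]
        · rw [h]; nlinarith [sq_nonneg (S.α k - S.lam (k+1))]
    · rw [if_neg (not_lt.mpr h2)]
      obtain ⟨hab, -⟩ := S.hcase3 k h2
      have hid : S.α (k+1) ^ 2 / S.lam (k+1) ^ 2 - S.α (k+1) ^ 2 / (S.α k * S.lam (k+1)) =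
          S.α (k+1) ^ 2 * (S.α k - S.lam (k+1)) / (S.α k * S.lam (k+1) ^ 2) := by
        field_simp
      rw [hid]
      constructor
      · apply div_nonneg _ (by positivity)
        have : 0 ≤ S.α k - S.lam (k+1) := by linarith
        positivity
      · rw [div_le_iff₀ (by positivity)]
        rcases hab with h | h
        · have hb2 : S.α (k+1) ^ 2 = S.α k / (2 * (S.α k - S.lam (k+1))) * S.lam (k+1) ^ 2 := by
            rw [h, mul_pow, Real.sq_sqrt (div_nonneg ha.le (by linarith) : (0:ℝ) ≤ S.α k / (2 * (S.α k - S.lam (k+1))))]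
          have hkey : S.α k / (2 * (S.α k - S.lam (k+1))) * S.lam (k+1) ^ 2 * (S.α k - S.lam (k+1)) =
              S.α k * S.lam (k+1) ^ 2 / 2 := by
            have : S.α k - S.lam (k+1) ≠ 0 := by linarith
            field_simp
          nlinarith [hb2, hkey]
        · have hb2 : S.α (k+1) ^ 2 = S.lam (k+1) ^ 2 / 2 := by
            rw [h, div_pow, Real.sq_sqrt (by norm_num : (0:ℝ) ≤ 2)]
          nlinarith [hb2, hl.le]

end AdaBB

namespace AdaBB
variable {n : ℕ} (S : AdaBB n)

lemma Paux_eq_theta (k : ℕ) : S.Paux (k+1) = S.θ (k+1) * S.α (k+1) := by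
  have ha := (S.pos k).1
  have hb := (S.pos (k+1)).1
  have hl := S.hlampos k
  rw [S.Paux_succ_eq k]
  rcases le_or_gt (S.α k) (S.lam (k+1)) with h1 | h1
  · rw [if_pos h1, (S.hcase1 k h1).2]
    field_simp
  · rw [if_neg (not_le.mpr h1)]
    rcases lt_or_ge (S.α k / 2) (S.lam (k+1)) with h2 | h2
    · rw [if_pos h2, (S.hcase2 k h2 h1).2]
      field_simp
    · rw [if_neg (not_lt.mpr h2), (S.hcase3 k h2).2]
      field_simp

lemma Paux_nonneg (k : ℕ) : 0 ≤ S.Paux (k+1) := by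
  have ha := (S.pos k).1
  have hb := (S.pos (k+1)).1
  have hl := S.hlampos k
  rw [S.Paux_succ_eq k]
  rcases le_or_gt (S.α k) (S.lam (k+1)) with h1 | h1
  · rw [if_pos h1]; positivity
  · rw [if_neg (not_le.mpr h1)]
    rcases lt_or_ge (S.α k / 2) (S.lam (k+1)) with h2 | h2
    · rw [if_pos h2, sub_nonneg, div_le_div_iff₀ hl ha]
      nlinarith
    · rw [if_neg (not_lt.mpr h2)]; positivity

lemma Paux_succ_le (k : ℕ) : S.Paux (k+2) ≤ (1 + S.θ (k+1)) * S.α (k+1) := by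
  have ha := (S.pos (k+1)).1
  have hb := (S.pos (k+2)).1
  have hl := S.hlampos (k+1)
  have hθ := (S.pos (k+1)).2
  have he := S.Paux_succ_eq (k+1)
  rw [he]
  rcases le_or_gt (S.α (k+1)) (S.lam (k+2)) with h1 | h1
  · rw [if_pos h1]
    obtain ⟨hab, -⟩ := S.hcase1 (k+1) h1
    have hb2 : S.α (k+2) ^ 2 = (1 + S.θ (k+1)) * S.α (k+1) ^ 2 := by
      rw [hab, mul_pow, Real.sq_sqrt (by linarith : (0:ℝ) ≤ 1 + S.θ (k+1))]
    rw [hb2, div_le_iff₀ ha]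
    nlinarith
  · rw [if_neg (not_le.mpr h1)]
    rcases lt_or_ge (S.α (k+1) / 2) (S.lam (k+2)) with h2 | h2
    · rw [if_pos h2]
      obtain ⟨hab, -⟩ := S.hcase2 (k+1) h2 h1
      have hid : 2 * S.α (k+2) ^ 2 / S.α (k+1) - S.α (k+2) ^ 2 / S.lam (k+2) =
          S.α (k+2) ^ 2 * (2 * S.lam (k+2) - S.α (k+1)) / (S.α (k+1) * S.lam (k+2)) := by
        field_simp
      rw [hid, div_le_iff₀ (by positivity)]
      rcases hab with h | h
      · have hble : S.α (k+2) ≤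
            Real.sqrt ((1 + S.θ (k+1)) * S.lam (k+2) / (2 * S.lam (k+2) - S.α (k+1))) * S.α (k+1) := by
          rw [h]
          exact mul_le_mul_of_nonneg_right (min_le_right _ _) ha.le
        have hnn : (0:ℝ) ≤ (1 + S.θ (k+1)) * S.lam (k+2) / (2 * S.lam (k+2) - S.α (k+1)) :=
          div_nonneg (by nlinarith) (by linarith)
        have hb2 : S.α (k+2) ^ 2 ≤
            (1 + S.θ (k+1)) * S.lam (k+2) / (2 * S.lam (k+2) - S.α (k+1)) * S.α (k+1) ^ 2 := by
          calc S.α (k+2) ^ 2 ≤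
              (Real.sqrt ((1 + S.θ (k+1)) * S.lam (k+2) / (2 * S.lam (k+2) - S.α (k+1))) * S.α (k+1)) ^ 2 := by
                nlinarith [hb.le]
            _ = _ := by rw [mul_pow, Real.sq_sqrt hnn]
        have hkey : (1 + S.θ (k+1)) * S.lam (k+2) / (2 * S.lam (k+2) - S.α (k+1)) * S.α (k+1) ^ 2 *
            (2 * S.lam (k+2) - S.α (k+1)) = (1 + S.θ (k+1)) * S.lam (k+2) * S.α (k+1) ^ 2 := by
          have : 2 * S.lam (k+2) - S.α (k+1) ≠ 0 := by linarith
          rw [div_mul_eq_mul_div, div_mul_cancel₀ _ this]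
        nlinarith [hb2, hkey]
      · rw [h]
        have h3 : S.lam (k+2) * (2 * S.lam (k+2) - S.α (k+1)) ≤ S.α (k+1) ^ 2 := by nlinarith
        have h4 := mul_le_mul_of_nonneg_left h3 hl.le
        nlinarith [h4, mul_nonneg (mul_nonneg hθ (sq_nonneg (S.α (k+1)))) hl.le]
    · rw [if_neg (not_lt.mpr h2)]
      obtain ⟨hab, -⟩ := S.hcase3 (k+1) h2
      rw [div_le_iff₀ ha]
      have hb2le : S.α (k+2) ^ 2 ≤ S.lam (k+2) ^ 2 := by
        rcases hab with h | h
        · have hne2 : (2 * (S.α (k+1) - S.lam (k+2))) ≠ 0 := ne_of_gt (by linarith)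
          have hb2 : S.α (k+2) ^ 2 * (2 * (S.α (k+1) - S.lam (k+2))) =
              S.α (k+1) * S.lam (k+2) ^ 2 := by
            rw [h, mul_pow, Real.sq_sqrt (div_nonneg ha.le (by linarith) :
              (0:ℝ) ≤ S.α (k+1) / (2 * (S.α (k+1) - S.lam (k+2)))),
              div_mul_eq_mul_div, div_mul_cancel₀ _ hne2]
          nlinarith [hb2, sq_nonneg (S.α (k+2))]
        · have hb2 : S.α (k+2) ^ 2 = S.lam (k+2) ^ 2 / 2 := by
            rw [h, div_pow, Real.sq_sqrt (by norm_num : (0:ℝ) ≤ 2)]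
          nlinarith [hb2, sq_nonneg (S.lam (k+2))]
      have h5 : S.lam (k+2) * S.lam (k+2) ≤ (S.α (k+1)/2) * (S.α (k+1)/2) :=
        mul_le_mul h2 h2 hl.le (by linarith)
      nlinarith [hb2le, h5, mul_nonneg (mul_nonneg hθ ha.le) ha.le]

lemma P_succ_eq (k : ℕ) : S.P (k+1) = S.Paux (k+1) := by
  simp [AdaBB.P]

lemma P_step : ∀ k, S.P (k+1) ≤ S.α k + S.P k := by
  intro k
  cases k with
  | zero =>
    rw [S.P_succ_eq 0]
    simp only [AdaBB.P, if_true, zero_add]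
    linarith
  | succ j =>
    rw [S.P_succ_eq (j+1), S.P_succ_eq j]
    have h1 := S.Paux_succ_le j
    have h2 := S.Paux_eq_theta j
    nlinarith [h1, h2]

lemma alphaP_nonneg : ∀ k, 0 ≤ S.α k + S.P k := by
  intro k
  cases k with
  | zero =>
    simp only [AdaBB.P, if_true, zero_add]
    have := S.Paux_nonneg 0
    linarith
  | succ j =>
    rw [S.P_succ_eq j]
    have := S.Paux_nonneg j
    have := (S.pos (j+1)).1
    linarith

end AdaBB

theorem key1 {a b lam A Vn D F0 F1 P' M' : ℝ} (ha : 0 < a)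
    (hD : 0 ≤ D)
    (hE3 : a*Vn = a*A + (a - 2*lam)*D)
    (hE4 : a*A ≤ F0 - F1 + lam*D)
    (hal : a ≤ lam) (hP : P'*a = b^2) (hM : M' = 0) :
    2*b^2*Vn + 2*P'*F1 ≤ 2*M'*a^2*A + 2*P'*F0 := by
  have e1 : 2*b^2*(a*Vn) = 2*b^2*(a*A + (a - 2*lam)*D) := by rw [hE3]
  have e2 : 2*b^2*(a*A) ≤ 2*b^2*(F0 - F1 + lam*D) :=
    mul_le_mul_of_nonneg_left hE4 (by positivity)
  have e3 : 0 ≤ 2*b^2*((lam - a)*D) := by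
    have : 0 ≤ lam - a := by linarith
    positivity
  have e4 : P'*a*F1 = b^2*F1 := by rw [hP]
  have e5 : P'*a*F0 = b^2*F0 := by rw [hP]
  have key : a * (2*b^2*Vn + 2*P'*F1) ≤ a * (2*M'*a^2*A + 2*P'*F0) := by
    rw [hM]; nlinarith [e1, e2, e3, e4, e5]
  exact le_of_mul_le_mul_left key ha

theorem key2 {a b lam A Vn D F0 F1 P' M' : ℝ} (ha : 0 < a) (hlam : 0 < lam)
    (hE3 : a*Vn = a*A + (a - 2*lam)*D)
    (hE4 : a*A ≤ F0 - F1 + lam*D)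
    (h1 : a/2 < lam) (h2 : lam < a)
    (hP : P'*(a*lam) = b^2*(2*lam - a)) (hM : M'*(a^2*lam) = b^2*(a - lam)) :
    2*b^2*Vn + 2*P'*F1 ≤ 2*M'*a^2*A + 2*P'*F0 := by
  have e1 : 2*b^2*lam*(a*Vn) = 2*b^2*lam*(a*A + (a - 2*lam)*D) := by rw [hE3]
  have e2 : 2*b^2*(2*lam - a)*(a*A) ≤ 2*b^2*(2*lam - a)*(F0 - F1 + lam*D) :=
    mul_le_mul_of_nonneg_left hE4 (by nlinarith)
  have e4 : P'*(a*lam)*F1 = b^2*(2*lam - a)*F1 := by rw [hP]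
  have e5 : P'*(a*lam)*F0 = b^2*(2*lam - a)*F0 := by rw [hP]
  have e6 : M'*(a^2*lam)*(a*A) = b^2*(a - lam)*(a*A) := by rw [hM]
  have key : (a*lam) * (2*b^2*Vn + 2*P'*F1) ≤ (a*lam) * (2*M'*a^2*A + 2*P'*F0) := by
    nlinarith [e1, e2, e4, e5, e6]
  exact le_of_mul_le_mul_left key (by positivity)

theorem key3 {a b lam A Vn D F0 F1 P' M' : ℝ} (ha : 0 < a) (hlam : 0 < lam)
    (hE3 : a*Vn = a*A + (a - 2*lam)*D)
    (hE4 : a*A ≤ F0 - F1 + lam*D)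
    (hE5 : lam^2*D ≤ a^2*A)
    (hl : lam ≤ a/2)
    (hP : P'*a = b^2) (hM : M'*(a*lam^2) = b^2*(a - lam)) :
    2*b^2*Vn + 2*P'*F1 ≤ 2*M'*a^2*A + 2*P'*F0 := by
  have e1 : 2*b^2*lam^2*(a*Vn) = 2*b^2*lam^2*(a*A + (a - 2*lam)*D) := by rw [hE3]
  have e2 : 2*b^2*lam^2*(a*A) ≤ 2*b^2*lam^2*(F0 - F1 + lam*D) :=
    mul_le_mul_of_nonneg_left hE4 (by positivity)
  have e3 : 2*b^2*(a - lam)*(lam^2*D) ≤ 2*b^2*(a - lam)*(a^2*A) :=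
    mul_le_mul_of_nonneg_left hE5 (by nlinarith)
  have e4 : P'*a*(lam^2*F1) = b^2*(lam^2*F1) := by rw [hP]
  have e5 : P'*a*(lam^2*F0) = b^2*(lam^2*F0) := by rw [hP]
  have e6 : M'*(a*lam^2)*(a^2*A) = b^2*(a - lam)*(a^2*A) := by rw [hM]
  have key : (a*lam^2) * (2*b^2*Vn + 2*P'*F1) ≤ (a*lam^2) * (2*M'*a^2*A + 2*P'*F0) := by
    nlinarith [e1, e2, e3, e4, e5, e6]
  exact le_of_mul_le_mul_left key (by positivity)

namespace AdaBB
variable {n : ℕ} (S : AdaBB n)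

lemma Upsilon_succ (xs : EuclideanSpace ℝ (Fin n)) (k : ℕ) :
    S.Upsilon xs (k+1) = ‖S.x (k+1) - xs‖^2 + 2*S.M (k+1)*‖S.x (k+1) - S.x k‖^2 +
      (2*S.α k + 2*S.P k)*(S.f (S.x k) - S.f xs) := by
  simp only [AdaBB.Upsilon, Nat.add_sub_cancel]

lemma ups_dec (xs : EuclideanSpace ℝ (Fin n)) (hxs : ∀ y, S.f xs ≤ S.f y) (k : ℕ) :
    S.Upsilon xs (k+2) ≤ S.Upsilon xs (k+1) := by
  have ha := (S.pos k).1
  have hb := (S.pos (k+1)).1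
  have hl := S.hlampos k
  have hD := (S.Dpos k).le
  have hE3 := S.E3 k
  have hE5 := S.E5 k
  have hF0 : 0 ≤ S.f (S.x k) - S.f xs := sub_nonneg.mpr (hxs _)
  have hF1 : 0 ≤ S.f (S.x (k+1)) - S.f xs := sub_nonneg.mpr (hxs _)
  have hE4 : S.α k * ‖S.f' (S.x k)‖^2 ≤
      (S.f (S.x k) - S.f xs) - (S.f (S.x (k+1)) - S.f xs) +
        S.lam (k+1) * ‖S.f' (S.x (k+1)) - S.f' (S.x k)‖^2 := by
    have := S.E4 k; linarith
  have hM2 := S.M_bounds (k+1)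
  have hPs := S.P_step k
  have hE2 : S.f (S.x (k+1)) - S.f xs ≤ ⟪S.f' (S.x (k+1)), S.x (k+1) - xs⟫ := by
    have hgi := my_grad_ineq S.hconv S.hgrad (S.x (k+1)) xs
    rw [show xs - S.x (k+1) = -(S.x (k+1) - xs) by abel, inner_neg_right] at hgi
    linarith
  have hE1 : ‖S.x (k+2) - xs‖^2 = ‖S.x (k+1) - xs‖^2
      - 2*S.α (k+1)*⟪S.f' (S.x (k+1)), S.x (k+1) - xs⟫
      + S.α (k+1)^2*‖S.f' (S.x (k+1))‖^2 := by
    rw [S.hstep k, show S.x (k+1) - S.α (k+1) • S.f' (S.x (k+1)) - xs =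
      (S.x (k+1) - xs) - S.α (k+1) • S.f' (S.x (k+1)) by abel, norm_sub_sq_real,
      real_inner_smul_right, norm_smul, Real.norm_eq_abs, abs_of_pos hb, mul_pow,
      real_inner_comm]
    ring
  have hx21 : ‖S.x (k+2) - S.x (k+1)‖^2 = S.α (k+1)^2*‖S.f' (S.x (k+1))‖^2 := by
    rw [S.xdiff (k+1), norm_neg, norm_smul, Real.norm_eq_abs, abs_of_pos hb, mul_pow]
  have hx10 : ‖S.x (k+1) - S.x k‖^2 = S.α k^2*‖S.f' (S.x k)‖^2 := by
    rw [S.xdiff k, norm_neg, norm_smul, Real.norm_eq_abs, abs_of_pos ha, mul_pow]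
  have hkey : 2*(S.α (k+1))^2*‖S.f' (S.x (k+1))‖^2
        + 2*(S.P (k+1))*(S.f (S.x (k+1)) - S.f xs) ≤
      2*(S.M (k+1))*(S.α k)^2*‖S.f' (S.x k)‖^2
        + 2*(S.P (k+1))*(S.f (S.x k) - S.f xs) := by
    rcases le_or_gt (S.α k) (S.lam (k+1)) with h1 | h1
    · have hMv : S.M (k+1) = 0 := by rw [S.M_succ_eq k, if_pos h1]
      have hPv : S.P (k+1) = S.α (k+1)^2 / S.α k := by
        rw [S.P_succ_eq k, S.Paux_succ_eq k, if_pos h1]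
      have hP' : S.P (k+1) * S.α k = S.α (k+1)^2 := by
        rw [hPv]; exact div_mul_cancel₀ _ (ne_of_gt ha)
      exact key1 ha hD hE3 hE4 h1 hP' hMv
    · rcases lt_or_ge (S.α k / 2) (S.lam (k+1)) with h2 | h2
      · have hMv : S.M (k+1) = S.α (k+1)^2/(S.lam (k+1)*S.α k) - S.α (k+1)^2/(S.α k)^2 := by
          rw [S.M_succ_eq k, if_neg (not_le.mpr h1), if_pos h2]
        have hPv : S.P (k+1) = 2*S.α (k+1)^2/S.α k - S.α (k+1)^2/S.lam (k+1) := by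
          rw [S.P_succ_eq k, S.Paux_succ_eq k, if_neg (not_le.mpr h1), if_pos h2]
        have hP' : S.P (k+1) * (S.α k * S.lam (k+1)) =
            S.α (k+1)^2 * (2*S.lam (k+1) - S.α k) := by
          rw [hPv]; field_simp
        have hM' : S.M (k+1) * ((S.α k)^2 * S.lam (k+1)) =
            S.α (k+1)^2 * (S.α k - S.lam (k+1)) := by
          rw [hMv]; field_simp
        exact key2 ha hl hE3 hE4 h2 h1 hP' hM'
      · have hMv : S.M (k+1) = S.α (k+1)^2/(S.lam (k+1))^2 - S.α (k+1)^2/(S.α k*S.lam (k+1)) := by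
          rw [S.M_succ_eq k, if_neg (not_le.mpr h1), if_neg (not_lt.mpr h2)]
        have hPv : S.P (k+1) = S.α (k+1)^2 / S.α k := by
          rw [S.P_succ_eq k, S.Paux_succ_eq k, if_neg (not_le.mpr h1), if_neg (not_lt.mpr h2)]
        have hP' : S.P (k+1) * S.α k = S.α (k+1)^2 := by
          rw [hPv]; exact div_mul_cancel₀ _ (ne_of_gt ha)
        have hM' : S.M (k+1) * (S.α k * (S.lam (k+1))^2) =
            S.α (k+1)^2 * (S.α k - S.lam (k+1)) := by
          rw [hMv]; field_simp
        exact key3 ha hl hE3 hE4 hE5 h2 hP' hM'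
  have hbv : 0 ≤ S.α (k+1)^2*‖S.f' (S.x (k+1))‖^2 := by positivity
  have e8 : 2*S.M (k+2)*(S.α (k+1)^2*‖S.f' (S.x (k+1))‖^2) ≤
      S.α (k+1)^2*‖S.f' (S.x (k+1))‖^2 := by
    nlinarith [mul_le_mul_of_nonneg_right hM2.2 hbv]
  have e7 : 2*S.α (k+1)*(S.f (S.x (k+1)) - S.f xs) ≤
      2*S.α (k+1)*⟪S.f' (S.x (k+1)), S.x (k+1) - xs⟫ :=
    mul_le_mul_of_nonneg_left hE2 (by positivity)
  have e9 : 2*S.P (k+1)*(S.f (S.x k) - S.f xs) ≤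
      (2*S.α k + 2*S.P k)*(S.f (S.x k) - S.f xs) := by
    apply mul_le_mul_of_nonneg_right _ hF0
    linarith
  rw [S.Upsilon_succ xs (k+1), S.Upsilon_succ xs k, hE1, hx21, hx10]
  linarith [hkey, e7, e8, e9]

end AdaBB

namespace AdaBB
variable {n : ℕ} (S : AdaBB n)

lemma E1 (xs : EuclideanSpace ℝ (Fin n)) (k : ℕ) :
    ‖S.x (k+1) - xs‖^2 = ‖S.x k - xs‖^2
      - 2*S.α k*⟪S.f' (S.x k), S.x k - xs⟫ + S.α k^2*‖S.f' (S.x k)‖^2 := by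
  have ha := (S.pos k).1
  rw [S.xstep k, show S.x k - S.α k • S.f' (S.x k) - xs =
    (S.x k - xs) - S.α k • S.f' (S.x k) by abel, norm_sub_sq_real,
    real_inner_smul_right, norm_smul, Real.norm_eq_abs, abs_of_pos ha, mul_pow,
    real_inner_comm]
  ring

lemma ups_le_first (xs : EuclideanSpace ℝ (Fin n)) (hxs : ∀ y, S.f xs ≤ S.f y) :
    ∀ k, S.Upsilon xs (k+1) ≤ S.Upsilon xs 1 := by
  intro k
  induction k with
  | zero => exact le_refl _
  | succ k ih => exact (S.ups_dec xs hxs k).trans ih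

lemma ups_one_le (xs : EuclideanSpace ℝ (Fin n)) (hxs : ∀ y, S.f xs ≤ S.f y) :
    S.Upsilon xs 1 ≤ ‖S.x 0 - xs‖ ^ 2 + S.α 0 ^ 2 * (1 + 2 * S.M 1) * ‖S.f' (S.x 0)‖ ^ 2 +
      max (2 * S.P 1 - 2 * S.α 0) 0 * (S.f (S.x 0) - S.f xs) := by
  have hF0 : 0 ≤ S.f (S.x 0) - S.f xs := sub_nonneg.mpr (hxs _)
  have hE2 : S.f (S.x 0) - S.f xs ≤ ⟪S.f' (S.x 0), S.x 0 - xs⟫ := by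
    have hgi := my_grad_ineq S.hconv S.hgrad (S.x 0) xs
    rw [show xs - S.x 0 = -(S.x 0 - xs) by abel, inner_neg_right] at hgi
    linarith
  have hE1 := S.E1 xs 0
  have hx10 : ‖S.x 1 - S.x 0‖^2 = S.α 0^2*‖S.f' (S.x 0)‖^2 := by
    have := S.xdiff 0
    rw [zero_add] at this
    rw [this, norm_neg, norm_smul, Real.norm_eq_abs, abs_of_pos S.hα0, mul_pow]
  have hU : S.Upsilon xs 1 = ‖S.x 1 - xs‖^2 + 2*S.M 1*‖S.x 1 - S.x 0‖^2 +
      (2*S.α 0 + 2*S.P 0)*(S.f (S.x 0) - S.f xs) := by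
    have := S.Upsilon_succ xs 0
    simpa using this
  have hP0 : S.P 0 = S.Paux 1 - S.α 0 := by simp [AdaBB.P]
  have hP1 : S.P 1 = S.Paux 1 := by
    have := S.P_succ_eq 0
    simpa using this
  have hmax : (2*S.P 1 - 2*S.α 0)*(S.f (S.x 0) - S.f xs) ≤
      max (2 * S.P 1 - 2 * S.α 0) 0 * (S.f (S.x 0) - S.f xs) :=
    mul_le_mul_of_nonneg_right (le_max_left _ _) hF0
  have hα0 := S.hα0
  have he2 : 2*S.α 0*(S.f (S.x 0) - S.f xs) ≤ 2*S.α 0*⟪S.f' (S.x 0), S.x 0 - xs⟫ :=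
    mul_le_mul_of_nonneg_left hE2 (by positivity)
  have e3 : (2*S.α 0 + 2*S.P 0)*(S.f (S.x 0) - S.f xs) =
      (2*S.P 1)*(S.f (S.x 0) - S.f xs) := by rw [hP0, hP1]; ring
  rw [hU, hE1, hx10]
  nlinarith [hmax, he2, e3]

lemma norm_le_ups (xs : EuclideanSpace ℝ (Fin n)) (hxs : ∀ y, S.f xs ≤ S.f y) (k : ℕ) :
    ‖S.x (k+1) - xs‖^2 ≤ S.Upsilon xs (k+1) := by
  rw [S.Upsilon_succ xs k]
  have h1 := (S.M_bounds k).1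
  have h2 := S.alphaP_nonneg k
  have hF0 : 0 ≤ S.f (S.x k) - S.f xs := sub_nonneg.mpr (hxs _)
  nlinarith [sq_nonneg ‖S.x (k+1) - S.x k‖, mul_nonneg h1 (sq_nonneg ‖S.x (k+1) - S.x k‖),
    mul_nonneg h2 hF0]

end AdaBB
end AuxAdaBB
open scoped RealInnerProductSpace in
/-- Proposition 3.7: lower bounds on the AdaBB stepsizes.  (i) If `α_j ≥ 1/(√2·L)` for some
`j`, then `α_k ≥ 1/(√2·L)` for every `k ≥ j`; (ii) `α_k ≥ c := min{α_0, 1/(√2·L)} > 0` for all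
`k ≥ 0`; (iii) consequently `Σ_{i=1}^k α_i ≥ c·k` for all `k ≥ 1`. -/
theorem adabb_stepsize_lower_bounds (n : ℕ) (S : AdaBB n)
    (xs : EuclideanSpace ℝ (Fin n)) (hxs : ∀ y, S.f xs ≤ S.f y)
    (R : ℝ) (hR0 : 0 ≤ R)
    (hR2 : R ^ 2 = ‖S.x 0 - xs‖ ^ 2 + S.α 0 ^ 2 * (1 + 2 * S.M 1) * ‖S.f' (S.x 0)‖ ^ 2 +
      max (2 * S.P 1 - 2 * S.α 0) 0 * (S.f (S.x 0) - S.f xs))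
    (L : ℝ) (hL : 0 < L)
    (hcoco : ∀ x y : EuclideanSpace ℝ (Fin n), ‖x - xs‖ ≤ R → ‖y - xs‖ ≤ R →
      (1 / L) * ‖S.f' x - S.f' y‖ ^ 2 ≤ ⟪S.f' x - S.f' y, x - y⟫) :
    (∀ j, 1 / (Real.sqrt 2 * L) ≤ S.α j → ∀ k, j ≤ k → 1 / (Real.sqrt 2 * L) ≤ S.α k) ∧
    (0 < min (S.α 0) (1 / (Real.sqrt 2 * L)) ∧
      ∀ k, min (S.α 0) (1 / (Real.sqrt 2 * L)) ≤ S.α k) ∧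
    (∀ k : ℕ, 1 ≤ k →
      min (S.α 0) (1 / (Real.sqrt 2 * L)) * (k : ℝ) ≤ ∑ i ∈ Finset.Icc 1 k, S.α i) := by
  set t := 1 / (Real.sqrt 2 * L) with hts
  have hs2 : (0:ℝ) < Real.sqrt 2 := Real.sqrt_pos.mpr (by norm_num)
  have ht : 0 < t := by rw [hts]; positivity
  have hhalf : (1:ℝ)/Real.sqrt 2 = Real.sqrt (1/2) := by
    rw [one_div, ← Real.sqrt_inv]; norm_num
  have hF0 : ∀ k, 0 ≤ S.f (S.x k) - S.f xs := fun k => sub_nonneg.mpr (hxs _)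
  have hsq : ∀ k, ‖S.x k - xs‖^2 ≤ R^2 := by
    intro k
    cases k with
    | zero =>
      rw [hR2]
      have hM1 : 0 ≤ S.M 1 := by have := (S.M_bounds 0).1; simpa using this
      have h1 : 0 ≤ S.α 0 ^ 2 * (1 + 2 * S.M 1) * ‖S.f' (S.x 0)‖ ^ 2 :=
        mul_nonneg (mul_nonneg (sq_nonneg _) (by linarith)) (sq_nonneg _)
      have h2 : 0 ≤ max (2 * S.P 1 - 2 * S.α 0) 0 * (S.f (S.x 0) - S.f xs) :=
        mul_nonneg (le_max_right _ _) (hF0 0)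
      linarith
    | succ j =>
      calc ‖S.x (j+1) - xs‖^2 ≤ S.Upsilon xs (j+1) := S.norm_le_ups xs hxs j
        _ ≤ S.Upsilon xs 1 := S.ups_le_first xs hxs j
        _ ≤ _ := S.ups_one_le xs hxs
        _ = R^2 := hR2.symm
  have hball : ∀ k, ‖S.x k - xs‖ ≤ R := by
    intro k
    have := Real.sqrt_le_sqrt (hsq k)
    rwa [Real.sqrt_sq (norm_nonneg _), Real.sqrt_sq hR0] at this
  have hlamge : ∀ k, 1/L ≤ S.lam (k+1) := by
    intro k
    rw [S.hlam k, le_div_iff₀ (S.Dpos k)]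
    exact hcoco _ _ (hball (k+1)) (hball k)
  have h12 : (1:ℝ) ≤ Real.sqrt 2 := Real.one_le_sqrt.mpr (by norm_num)
  have htlam : ∀ k, t ≤ S.lam (k+1) := by
    intro k
    refine le_trans ?_ (hlamge k)
    rw [hts, div_le_div_iff₀ (by positivity) hL]
    nlinarith [mul_nonneg (by linarith : (0:ℝ) ≤ Real.sqrt 2 - 1) hL.le]
  have htlam2 : ∀ k, t ≤ S.lam (k+1) / Real.sqrt 2 := by
    intro k
    rw [hts, show Real.sqrt 2 * L = L * Real.sqrt 2 by ring, ← div_div]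
    exact div_le_div_of_nonneg_right (hlamge k) hs2.le
  have hstepmin : ∀ k, min (S.α k) t ≤ S.α (k+1) := by
    intro k
    have ha := (S.pos k).1
    have hθ := (S.pos k).2
    have hl := S.hlampos k
    rcases le_or_gt (S.α k) (S.lam (k+1)) with h1 | h1
    · have hab := (S.hcase1 k h1).1
      have h1s : 1 ≤ Real.sqrt (1 + S.θ k) := Real.one_le_sqrt.mpr (by linarith)
      calc min (S.α k) t ≤ S.α k := min_le_left _ _
        _ ≤ Real.sqrt (1 + S.θ k) * S.α k := le_mul_of_one_le_left ha.le h1s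
        _ = S.α (k+1) := hab.symm
    · rcases lt_or_ge (S.α k / 2) (S.lam (k+1)) with h2 | h2
      · obtain ⟨hab, -⟩ := S.hcase2 k h2 h1
        rcases hab with h | h
        · rcases le_total (Real.sqrt (S.lam (k+1) / (2 * (S.α k - S.lam (k+1)))))
              (Real.sqrt ((1 + S.θ k) * S.lam (k+1) / (2 * S.lam (k+1) - S.α k))) with hxy | hxy
          · rw [h, min_eq_left hxy]
            have hXq : (1:ℝ)/2 ≤ S.lam (k+1) / (2 * (S.α k - S.lam (k+1))) := by
              rw [le_div_iff₀ (by linarith)]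
              linarith
            have hX : 1/Real.sqrt 2 ≤ Real.sqrt (S.lam (k+1) / (2 * (S.α k - S.lam (k+1)))) := by
              rw [hhalf]
              exact Real.sqrt_le_sqrt hXq
            calc min (S.α k) t ≤ t := min_le_right _ _
              _ ≤ S.lam (k+1) / Real.sqrt 2 := htlam2 k
              _ = (1/Real.sqrt 2) * S.lam (k+1) := by ring
              _ ≤ Real.sqrt (S.lam (k+1) / (2 * (S.α k - S.lam (k+1)))) * S.lam (k+1) :=
                  mul_le_mul_of_nonneg_right hX hl.le
              _ ≤ Real.sqrt (S.lam (k+1) / (2 * (S.α k - S.lam (k+1)))) * S.α k :=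
                  mul_le_mul_of_nonneg_left h1.le (Real.sqrt_nonneg _)
          · rw [h, min_eq_right hxy]
            have hY : 1 ≤ Real.sqrt ((1 + S.θ k) * S.lam (k+1) / (2 * S.lam (k+1) - S.α k)) := by
              rw [Real.one_le_sqrt, le_div_iff₀ (by linarith)]
              nlinarith
            calc min (S.α k) t ≤ S.α k := min_le_left _ _
              _ ≤ _ := le_mul_of_one_le_left ha.le hY
        · rw [h]
          exact (min_le_right _ _).trans (htlam k)
      · obtain ⟨hab, -⟩ := S.hcase3 k h2
        rcases hab with h | h
        · rw [h]
          have hXq : (1:ℝ)/2 ≤ S.α k / (2 * (S.α k - S.lam (k+1))) := by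
            rw [le_div_iff₀ (by linarith)]; linarith
          have hX : 1/Real.sqrt 2 ≤ Real.sqrt (S.α k / (2 * (S.α k - S.lam (k+1)))) := by
            rw [hhalf]
            exact Real.sqrt_le_sqrt hXq
          calc min (S.α k) t ≤ t := min_le_right _ _
            _ ≤ S.lam (k+1) / Real.sqrt 2 := htlam2 k
            _ = (1/Real.sqrt 2) * S.lam (k+1) := by ring
            _ ≤ _ := mul_le_mul_of_nonneg_right hX hl.le
        · rw [h]
          exact (min_le_right _ _).trans (htlam2 k)
  have hlow : ∀ k, min (S.α 0) t ≤ S.α k := by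
    intro k
    induction k with
    | zero => exact min_le_left _ _
    | succ m ih => exact (le_min ih (min_le_right _ _)).trans (hstepmin m)
  refine ⟨?_, ⟨lt_min S.hα0 ht, hlow⟩, ?_⟩
  · intro j hj k hk
    induction k, hk using Nat.le_induction with
    | base => exact hj
    | succ m hm ih =>
      have h := hstepmin m
      rwa [min_eq_right ih] at h
  · intro k hk
    calc min (S.α 0) t * (k:ℝ) = (Finset.Icc 1 k).card • (min (S.α 0) t) := by
          rw [Nat.card_Icc, Nat.add_sub_cancel, nsmul_eq_mul]; ring
      _ ≤ ∑ i ∈ Finset.Icc 1 k, S.α i :=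
          Finset.card_nsmul_le_sum _ _ _ (fun i _ => hlow i)
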